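/- arXiv:1810.00694 — 5 statements merged into one kernel-verified Lean document; each statement's English description precedes it below -/
import Mathlib

section
/- In a structural causal model, an intervention on a variable X does not change the value of any variable that is not a descendant of X. Precisely: let V be a finite type, R a well-founded parent relation on V, f a family of structural functions with valuation val defined by well-founded recursion, and X : V, x : D. Define the intervened family f[X←x] to equal f on every v ≠ X and to be the constant function returning x at X. Then for every context u : V → E and every variable w such that ¬ Relation.ReflTransGen R X w (i.e., w is not X and not a descendant of X), one has val f[X←x] u w = val f u w; consequently, for any two intervention values x, x' : D, val f[X←x] u w = val f[X←x'] u w. -/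
/-- The valuation of a structural causal model: each variable's value is computed
from its exogenous input and the (recursively computed) values of its parents,
by well-founded recursion on the parent relation `R`. -/
def val {V Ex D : Type*} (R : V → V → Prop) (hR : WellFounded R)
    (f : ∀ v : V, Ex → (∀ w : V, R w v → D) → D) (u : V → Ex) : V → D :=
  hR.fix fun v ih => f v (u v) fun w hw => ih w hw

/-- The intervention `do(X = x)`: the structural function of `X` is replaced by
the constant function returning `x`; all other structural functions are unchanged. -/
def intervene {V Ex D : Type*} [DecidableEq V] (R : V → V → Prop)
    (f : ∀ v : V, Ex → (∀ w : V, R w v → D) → D) (X : V) (x : D) :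
    ∀ v : V, Ex → (∀ w : V, R w v → D) → D :=
  fun v => if v = X then fun _ _ => x else f v

theorem val_eq {V Ex D : Type*} (R : V → V → Prop) (hR : WellFounded R)
    (f : ∀ v : V, Ex → (∀ w : V, R w v → D) → D) (u : V → Ex) (v : V) :
    val R hR f u v = f v (u v) fun w _ => val R hR f u w := by
  unfold val
  rw [hR.fix_eq]

theorem key {V Ex D : Type*} [DecidableEq V]
    (R : V → V → Prop) (hR : WellFounded R)
    (f : ∀ v : V, Ex → (∀ w : V, R w v → D) → D) (X : V) (x : D) (u : V → Ex) :
    ∀ w : V, ¬ Relation.ReflTransGen R X w →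
      val R hR (intervene R f X x) u w = val R hR f u w := by
  intro w
  induction w using hR.induction with
  | _ w ih =>
    intro hw
    rw [val_eq, val_eq]
    have hne : w ≠ X := fun h => hw (h ▸ Relation.ReflTransGen.refl)
    simp only [intervene, if_neg hne]
    congr 1
    funext p hp
    exact ih p hp (fun h => hw (h.tail hp))

/-- An intervention on a variable `X` does not change the value of any variable `w`
that is not `X` and not a descendant of `X`; consequently two different intervention
values on `X` give the same value at `w`. -/
theorem val_intervene_eq_of_not_descendant {V Ex D : Type*} [Finite V] [DecidableEq V]
    (R : V → V → Prop) (hR : WellFounded R)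
    (f : ∀ v : V, Ex → (∀ w : V, R w v → D) → D) (X : V) :
    ∀ (u : V → Ex) (w : V), ¬ Relation.ReflTransGen R X w →
      (∀ x : D, val R hR (intervene R f X x) u w = val R hR f u w) ∧
      (∀ x x' : D,
        val R hR (intervene R f X x) u w = val R hR (intervene R f X x') u w) := by
  intro u w hw
  refine ⟨fun x => key R hR f X x u w hw, fun x x' => ?_⟩
  rw [key R hR f X x u w hw, key R hR f X x' u w hw]
end

section
/- (Deterministic form of Lemma 1 of Kusner et al., as used in the paper.) Let a structural causal model be given over a finite variable set V with well-founded parent relation R, structural functions f, and valuation val defined by well-founded recursion. Let Ŷ : V be a designated predictor variable and A ⊆ V a set of protected attributes such that no element of A is an ancestor-or-equal of Ŷ (for every X ∈ A, ¬ Relation.ReflTransGen R X Ŷ); equivalently, the structural equation determining Ŷ depends only on variables that are not descendants of A. Then for every context u : V → E and any two assignments a, a' : A → D, the value of Ŷ under the intervention do(A = a) equals its value under do(A = a'): val f[A←a] u Ŷ = val f[A←a'] u Ŷ. -/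
open Classical in
/-- The intervention `do(A = a)`: the structural function of each `X ∈ A` is replaced
by the constant function returning `a X`; all other structural functions are unchanged. -/
noncomputable def interveneSet {V Ex D : Type*} (R : V → V → Prop)
    (f : ∀ v : V, Ex → (∀ w : V, R w v → D) → D) (A : Set V) (a : A → D) :
    ∀ v : V, Ex → (∀ w : V, R w v → D) → D :=
  fun v => if h : v ∈ A then fun _ _ => a ⟨v, h⟩ else f v

/-- (Deterministic form of Lemma 1 of Kusner et al.) If no protected attribute in `A`
is an ancestor-or-equal of the predictor `Ŷ`, then the value of `Ŷ` is invariant under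
any two interventions `do(A = a)` and `do(A = a')`. -/
theorem counterfactual_invariance_of_not_descendant {V Ex D : Type*} [Finite V]
    (R : V → V → Prop) (hR : WellFounded R)
    (f : ∀ v : V, Ex → (∀ w : V, R w v → D) → D)
    (Yhat : V) (A : Set V)
    (hA : ∀ X ∈ A, ¬ Relation.ReflTransGen R X Yhat) :
    ∀ (u : V → Ex) (a a' : A → D),
      val R hR (interveneSet R f A a) u Yhat =
        val R hR (interveneSet R f A a') u Yhat := by
  intro u a a'
  have key : ∀ v, (∀ X ∈ A, ¬ Relation.ReflTransGen R X v) →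
      val R hR (interveneSet R f A a) u v = val R hR (interveneSet R f A a') u v := by
    intro v
    induction v using hR.induction with
    | _ v ih =>
      intro hv
      rw [val, val, hR.fix_eq, hR.fix_eq]
      have hvA : v ∉ A := fun h => hv v h .refl
      simp only [interveneSet, dif_neg hvA]
      congr 1
      funext w hw
      exact ih w hw (fun X hX hr => hv X hX (hr.tail hw))
  exact key Yhat hA
end

section
/- (Probabilistic form of Lemma 1 of Kusner et al., as used in the paper.) Let a structural causal model be given over a finite variable set V with well-founded parent relation R, structural functions f, valuation val, and additionally a probability measure P on the space of contexts V → E (with D a measurable space and each map u ↦ val f[A←a] u Ŷ measurable). Let Ŷ : V be a predictor variable and A ⊆ V a set of protected attributes such that no element of A is an ancestor-or-equal of Ŷ (for every X ∈ A, ¬ Relation.ReflTransGen R X Ŷ). Then for any two assignments a, a' : A → D, the pushforward measure of P under the map u ↦ val f[A←a] u Ŷ equals the pushforward measure of P under u ↦ val f[A←a'] u Ŷ; that is, the counterfactual distributions P(Ŷ_{A←a}) and P(Ŷ_{A←a'}) coincide, so Ŷ is counterfactually fair. -/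
open MeasureTheory in
/-- (Probabilistic form of Lemma 1 of Kusner et al.) If no protected attribute in `A`
is an ancestor-or-equal of the predictor `Ŷ`, then the counterfactual distributions of
`Ŷ` under `do(A = a)` and `do(A = a')` — the pushforwards of the context distribution
`P` under the corresponding valuations — coincide: the predictor is counterfactually
fair. -/
theorem counterfactual_fairness_of_not_descendant {V Ex D : Type*} [Finite V]
    [MeasurableSpace Ex] [MeasurableSpace D]
    (R : V → V → Prop) (hR : WellFounded R)
    (f : ∀ v : V, Ex → (∀ w : V, R w v → D) → D)
    (P : Measure (V → Ex)) [IsProbabilityMeasure P]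
    (Yhat : V) (A : Set V)
    (hmeas : ∀ a : A → D,
      Measurable fun u : V → Ex => val R hR (interveneSet R f A a) u Yhat)
    (hA : ∀ X ∈ A, ¬ Relation.ReflTransGen R X Yhat)
    (a a' : A → D) :
    P.map (fun u : V → Ex => val R hR (interveneSet R f A a) u Yhat) =
      P.map (fun u : V → Ex => val R hR (interveneSet R f A a') u Yhat) := by
  have key : ∀ v : V, (∀ X ∈ A, ¬ Relation.ReflTransGen R X v) → ∀ u : V → Ex,
      val R hR (interveneSet R f A a) u v = val R hR (interveneSet R f A a') u v := by
    intro v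
    induction v using hR.induction with
    | _ v ih =>
      intro hv u
      have hvA : v ∉ A := fun h => hv v h Relation.ReflTransGen.refl
      rw [val, val, WellFounded.fix_eq, WellFounded.fix_eq]
      simp only [interveneSet, dif_neg hvA]
      congr 1
      funext w hw
      exact ih w hw (fun X hX hX' => hv X hX (hX'.tail hw)) u
  have : (fun u : V → Ex => val R hR (interveneSet R f A a) u Yhat) =
      fun u => val R hR (interveneSet R f A a') u Yhat := by
    funext u; exact key Yhat hA u
  rw [this]
end

section
/- (Theorem 1, impossibility of unbiased aggregation of causal graphs, after Bradley, Dietrich and List.) Let V be a finite type with at least three elements and let n ≥ 1 be the number of experts. There is no aggregation rule F mapping each n-tuple of acyclic binary relations on V (universal domain: F is defined on all profiles P : Fin n → (V → V → Bool) in which every P i is acyclic) to a binary relation F P : V → V → Bool, satisfying simultaneously: (Acyclicity) for every profile P of acyclic relations, F P is acyclic; (Unbiasedness) there exists a function g : (Fin n → Bool) → Bool such that for every profile P of acyclic relations and all x y : V, F P x y = g (fun i => P i x y), and g is neutral between positive and negative outcomes: g (fun i => !(b i)) = !(g b) for every b : Fin n → Bool; (Non-dictatorship) there is no index i : Fin n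 such that F P x y = P i x y for every profile P of acyclic relations and all x, y : V. Here a relation Q : V → V → Bool is acyclic if there is no x : V with Relation.TransGen (fun a b => Q a b = true) x x. -/
/-- A binary relation `Q : V → V → Bool` is acyclic if no vertex lies on a
directed cycle, i.e. there is no `x` with `Relation.TransGen` from `x` to itself. -/
def AcyclicRel {V : Type*} (Q : V → V → Bool) : Prop :=
  ¬ ∃ x : V, Relation.TransGen (fun a b => Q a b = true) x x

private lemma acyclic_of_rank {V : Type*} (Q : V → V → Bool) (f : V → ℕ)
    (h : ∀ a b, Q a b = true → f a < f b) : AcyclicRel Q := by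
  rintro ⟨x, hx⟩
  have key : ∀ a b : V, Relation.TransGen (fun a b => Q a b = true) a b → f a < f b := by
    intro a b hab
    induction hab with
    | single h' => exact h _ _ h'
    | tail _ h' ih => exact ih.trans (h _ _ h')
  exact lt_irrefl _ (key x x hx)

private lemma cycle_acyclic {V : Type*} [DecidableEq V] {x y z : V}
    (hxy : x ≠ y) (hxz : x ≠ z) (hyz : y ≠ z) (b c : Bool) :
    AcyclicRel (fun u v =>
      if u = x ∧ v = y then b else if u = y ∧ v = z then c
      else if u = z ∧ v = x then !(b && c) else false) := by
  have hedge : ∀ a b' : V,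
      (if a = x ∧ b' = y then b else if a = y ∧ b' = z then c
        else if a = z ∧ b' = x then !(b && c) else false) = true →
      (a = x ∧ b' = y ∧ b = true) ∨ (a = y ∧ b' = z ∧ c = true) ∨
      (a = z ∧ b' = x ∧ (!(b && c)) = true) := by
    intro a b' h
    by_cases h1 : a = x ∧ b' = y
    · rw [if_pos h1] at h; exact Or.inl ⟨h1.1, h1.2, h⟩
    · rw [if_neg h1] at h
      by_cases h2 : a = y ∧ b' = z
      · rw [if_pos h2] at h; exact Or.inr (Or.inl ⟨h2.1, h2.2, h⟩)
      · rw [if_neg h2] at h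
        by_cases h3 : a = z ∧ b' = x
        · rw [if_pos h3] at h; exact Or.inr (Or.inr ⟨h3.1, h3.2, h⟩)
        · rw [if_neg h3] at h; cases h
  cases b with
  | false =>
      refine acyclic_of_rank _ (fun v => if v = y then 0 else if v = z then 1 else 2) ?_
      intro a b' h
      rcases hedge a b' h with ⟨rfl, rfl, hb⟩ | ⟨rfl, rfl, hc⟩ | ⟨rfl, rfl, hd⟩
      · simp at hb
      · simp [hxy, hxz, hyz, Ne.symm hxy, Ne.symm hxz, Ne.symm hyz]
      · simp [hxy, hxz, hyz, Ne.symm hxy, Ne.symm hxz, Ne.symm hyz]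
  | true =>
      cases c with
      | false =>
          refine acyclic_of_rank _ (fun v => if v = z then 0 else if v = x then 1 else 2) ?_
          intro a b' h
          rcases hedge a b' h with ⟨rfl, rfl, hb⟩ | ⟨rfl, rfl, hc⟩ | ⟨rfl, rfl, hd⟩
          · simp [hxy, hxz, hyz, Ne.symm hxy, Ne.symm hxz, Ne.symm hyz]
          · simp at hc
          · simp [hxy, hxz, hyz, Ne.symm hxy, Ne.symm hxz, Ne.symm hyz]
      | true =>
          refine acyclic_of_rank _ (fun v => if v = x then 0 else if v = y then 1 else 2) ?_
          intro a b' h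
          rcases hedge a b' h with ⟨rfl, rfl, hb⟩ | ⟨rfl, rfl, hc⟩ | ⟨rfl, rfl, hd⟩
          · simp [hxy, hxz, hyz, Ne.symm hxy, Ne.symm hxz, Ne.symm hyz]
          · simp [hxy, hxz, hyz, Ne.symm hxy, Ne.symm hxz, Ne.symm hyz]
          · simp at hd

/-- (Theorem 1, after Bradley, Dietrich and List.) On at least three variables, there
is no aggregation rule for profiles of acyclic causal graphs simultaneously satisfying
universal domain, acyclicity of the output, unbiasedness (edgewise aggregation by a
single function `g` that is neutral between positive and negative outcomes), and
non-dictatorship. -/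
theorem no_unbiased_nondictatorial_acyclic_aggregation
    {V : Type*} [Finite V] (hV : 3 ≤ Nat.card V) (n : ℕ) (hn : 1 ≤ n) :
    ¬ ∃ F : (Fin n → (V → V → Bool)) → (V → V → Bool),
      -- Acyclicity: on every profile of acyclic relations, the output is acyclic
      (∀ P : Fin n → (V → V → Bool), (∀ i, AcyclicRel (P i)) → AcyclicRel (F P)) ∧
      -- Unbiasedness: each edge of the output is decided from the experts' judgments
      -- on that same edge by a single function `g`, neutral between outcomes
      (∃ g : (Fin n → Bool) → Bool,
        (∀ P : Fin n → (V → V → Bool), (∀ i, AcyclicRel (P i)) →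
          ∀ x y : V, F P x y = g (fun i => P i x y)) ∧
        (∀ b : Fin n → Bool, g (fun i => !(b i)) = !(g b))) ∧
      -- Non-dictatorship: no expert's relation is always returned verbatim
      (¬ ∃ i : Fin n, ∀ P : Fin n → (V → V → Bool), (∀ i', AcyclicRel (P i')) →
        ∀ x y : V, F P x y = P i x y) := by
  rintro ⟨F, hAc, ⟨g, hg, hneu⟩, hND⟩
  haveI := Fintype.ofFinite V
  haveI := Classical.decEq V
  have h3 : 3 ≤ Fintype.card V := by rwa [Nat.card_eq_fintype_card] at hV
  obtain ⟨s, -, hs3⟩ := Finset.exists_subset_card_eq (s := (Finset.univ : Finset V)) (n := 3) (by simpa using h3)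
  obtain ⟨x, y, z, hxy, hxz, hyz, -⟩ := Finset.card_eq_three.mp hs3
  -- Step A: the empty coalition is losing
  have hPac0 : ∀ i : Fin n, AcyclicRel (fun (_ _ : V) => false) := by
    intro i
    exact acyclic_of_rank _ (fun _ => 0) (by intro a b h; simp at h)
  have hfalse : g (fun _ => false) = false := by
    by_contra h
    have h' : g (fun _ => false) = true := by
      cases hgf : g (fun _ => false) <;> simp_all
    have hx1 : F (fun _ _ _ => false) x x = true := by
      rw [hg _ hPac0 x x]; exact h'
    exact hAc _ hPac0 ⟨x, Relation.TransGen.single hx1⟩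
  have htrue : g (fun _ => true) = true := by
    simpa [hfalse] using hneu (fun _ => false)
  -- Step B: winning coalitions are closed under intersection
  have hinter : ∀ b c : Fin n → Bool, g b = true → g c = true →
      g (fun i => b i && c i) = true := by
    intro b c hb hc
    by_contra hbc
    have hbc' : g (fun i => b i && c i) = false := by
      cases h : g (fun i => b i && c i) <;> simp_all
    set P : Fin n → V → V → Bool := fun j u v =>
      if u = x ∧ v = y then b j else if u = y ∧ v = z then c j
      else if u = z ∧ v = x then !(b j && c j) else false with hP
    have hPac : ∀ j, AcyclicRel (P j) := fun j => cycle_acyclic hxy hxz hyz (b j) (c j)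
    have e1 : F P x y = true := by
      rw [hg P hPac x y]
      have hfun : (fun i => P i x y) = b := by
        funext i; simp [hP, hxy, hxz, hyz, Ne.symm hxy, Ne.symm hxz, Ne.symm hyz]
      rw [hfun]; exact hb
    have e2 : F P y z = true := by
      rw [hg P hPac y z]
      have hfun : (fun i => P i y z) = c := by
        funext i; simp [hP, hxy, hxz, hyz, Ne.symm hxy, Ne.symm hxz, Ne.symm hyz]
      rw [hfun]; exact hc
    have e3 : F P z x = true := by
      rw [hg P hPac z x]
      have hfun : (fun i => P i z x) = (fun i => !(b i && c i)) := by
        funext i; simp [hP, hxy, hxz, hyz, Ne.symm hxy, Ne.symm hxz, Ne.symm hyz]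
      rw [hfun]
      have h := hneu (fun i => b i && c i)
      simp only [hbc', Bool.not_false] at h
      exact h
    have t1 : Relation.TransGen (fun a b : V => F P a b = true) x y :=
      Relation.TransGen.single e1
    exact hAc P hPac ⟨x, (t1.tail e2).tail e3⟩
  -- Step C: some singleton coalition is winning
  have hsing : ∃ i : Fin n, g (fun j => decide (j = i)) = true := by
    by_contra hno
    push_neg at hno
    have hno' : ∀ i, g (fun j => decide (j = i)) = false := by
      intro i
      have := hno i
      cases h : g (fun j => decide (j = i)) <;> simp_all
    have key : ∀ s : Finset (Fin n), g (fun j => decide (j ∉ s)) = true := by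
      intro s
      refine Finset.induction_on s ?_ ?_
      · simpa using htrue
      · intro a t _ ih
        have hca : g (fun j => !(decide (j = a))) = true := by
          have h := hneu (fun j => decide (j = a))
          simp only [hno' a, Bool.not_false] at h
          exact h
        have hfun : (fun j => (!(decide (j = a))) && decide (j ∉ t)) =
            (fun j => decide (j ∉ insert a t)) := by
          funext j
          by_cases h1 : j = a <;> by_cases h2 : j ∈ t <;> simp [h1, h2]
        rw [← hfun]
        exact hinter _ _ hca ih
    have h := key Finset.univ
    simp [hfalse] at h
  obtain ⟨i, hi⟩ := hsing
  -- Step D: expert i is a dictator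
  have hwin : ∀ b : Fin n → Bool, b i = true → g b = true := by
    intro b hbi
    by_contra h
    have hb' : g b = false := by cases hgb : g b <;> simp_all
    have hnb : g (fun j => !(b j)) = true := by
      have h1 := hneu b
      simp only [hb', Bool.not_false] at h1
      exact h1
    have h0 : g (fun j => (!(b j)) && decide (j = i)) = true := hinter _ _ hnb hi
    have hfun : (fun j => (!(b j)) && decide (j = i)) = (fun _ => false) := by
      funext j
      by_cases hj : j = i
      · subst hj; simp [hbi]
      · simp [hj]
    rw [hfun] at h0
    exact absurd h0 (by simp [hfalse])
  have hdict : ∀ b : Fin n → Bool, g b = b i := by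
    intro b
    cases hbi : b i with
    | false =>
        have hnb : g (fun j => !(b j)) = true := hwin _ (by simp [hbi])
        have h2 : (!(g b)) = true := (hneu b).symm.trans hnb
        simpa using h2
    | true => rw [hwin b hbi]
  exact hND ⟨i, fun P hPac x' y' => by rw [hg P hPac x' y']; exact hdict _⟩
end

section
/- (Counterfactual fairness of the removal-pooling output.) Let V be a finite type, G₁, …, Gₙ directed graphs on V given by edge relations E_j : V → V → Prop, A ⊆ V a set of protected attributes, and Ŷ : V a predictor with Ŷ ∉ S, where S = A ∪ ⋃_{j=1}^{n} {v | ∃ a ∈ A, Relation.TransGen E_j a v}. Suppose G* is any directed graph on V each of whose edges lies in the union of the pruned expert edge sets, i.e., whenever E* u v then u ∉ S, v ∉ S, and E_j u v for some j (as is the case for the output of the removal-pooling algorithm, whose pooling step only inserts edges of the pruned expert graphs). Then no element of A is an ancestor-or-equal of Ŷ in G* (for every X ∈ A, ¬ Relation.ReflTransGen E* X Ŷ). Consequently, for any structural causal model whose parent relation is E* (with E* well-founded), any structural functions f, any context u, and any two assignments a, a' : A → D, the value of Ŷ is the same under the interventions do(A = a) and do(A = a'): val f[A←a] u Ŷ =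 val f[A←a'] u Ŷ; that is, the predictor of the pooled model is counterfactually fair. -/
/-- (Counterfactual fairness of the removal-pooling output.) If every edge of the
pooled graph `E*` avoids `S = A ∪ ⋃ⱼ (descendants of A in the j-th expert graph)` and
comes from some expert graph, and the predictor `Ŷ ∉ S`, then no protected attribute
is an ancestor-or-equal of `Ŷ` in `E*`; consequently, in any structural causal model
with parent relation `E*`, the value of `Ŷ` is invariant under interventions
`do(A = a)` and `do(A = a')`: the pooled predictor is counterfactually fair. -/
theorem removal_pooling_counterfactually_fair {V Ex D : Type*} [Finite V] (n : ℕ)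
    (Ej : Fin n → V → V → Prop) (A : Set V) (Yhat : V) (S : Set V)
    (hS : S = A ∪ ⋃ j : Fin n, {v : V | ∃ a ∈ A, Relation.TransGen (Ej j) a v})
    (hY : Yhat ∉ S)
    (Estar : V → V → Prop)
    (hE : ∀ u v : V, Estar u v → u ∉ S ∧ v ∉ S ∧ ∃ j : Fin n, Ej j u v) :
    (∀ X ∈ A, ¬ Relation.ReflTransGen Estar X Yhat) ∧
    ∀ (hR : WellFounded Estar)
      (f : ∀ v : V, Ex → (∀ w : V, Estar w v → D) → D)
      (u : V → Ex) (a a' : A → D),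
      val Estar hR (interveneSet Estar f A a) u Yhat =
        val Estar hR (interveneSet Estar f A a') u Yhat := by
  have key : ∀ X ∈ A, X ∉ S → False := fun X hX hXS => hXS (hS ▸ Or.inl hX)
  have noanc : ∀ v : V, v ∉ S → ∀ X ∈ A, ¬ Relation.ReflTransGen Estar X v := by
    intro v hv X hX hpath
    rcases (Relation.ReflTransGen.cases_head hpath) with rfl | ⟨c, hXc, _⟩
    · exact hv (hS ▸ Or.inl hX)
    · exact (hE X c hXc).1 (hS ▸ Or.inl hX)
  refine ⟨noanc Yhat hY, ?_⟩
  intro hR f u a a'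
  have main : ∀ v : V, (∀ X ∈ A, ¬ Relation.ReflTransGen Estar X v) →
      val Estar hR (interveneSet Estar f A a) u v =
      val Estar hR (interveneSet Estar f A a') u v := by
    intro v
    induction v using hR.induction with
    | _ v ih =>
      intro hv
      have hvA : v ∉ A := fun h => hv v h Relation.ReflTransGen.refl
      rw [val, WellFounded.fix_eq, val, WellFounded.fix_eq]
      simp only [interveneSet, dif_neg hvA]
      congr 1
      funext w hw
      exact ih w hw fun X hX hp => hv X hX (hp.tail hw)
  exact main Yhat (noanc Yhat hY)
end
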